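/- arXiv:2011.13770 — 2 statements merged into one kernel-verified Lean document; each statement's English description precedes it below -/
import Mathlib

section
/- Let Ω be a real-connected slice-domain in W. Then for every I ∈ 𝒞, the set Ω_I = Ω ∩ ℂ_I^d is open and connected in the Euclidean topology of ℂ_I^d. -/
set_option maxHeartbeats 1000000
set_option linter.unusedVariables false


noncomputable section

/-- `ℝ^{2n}` as a Euclidean space. -/
abbrev V (n : ℕ) : Type := EuclideanSpace ℝ (Fin (2 * n))

/-- `End(ℝ^{2n})`: the (continuous, hence in finite dimension all) real-linear
endomorphisms of `ℝ^{2n}`; multiplication is composition. -/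
abbrev EndE (n : ℕ) : Type := V n →L[ℝ] V n

/-- The set `𝔠_n` of complex structures on `ℝ^{2n}`. -/
def CS (n : ℕ) : Set (EndE n) := {I | I * I = -1}

/-- The slice `ℂ_I = {x·id + y·I : x, y ∈ ℝ}`. -/
def CI {n : ℕ} (I : EndE n) : Set (EndE n) := {A | ∃ x y : ℝ, A = x • (1 : EndE n) + y • I}

/-- The slice `ℂ_I^d ⊆ [End(ℝ^{2n})]^d`. -/
def CId (n d : ℕ) (I : EndE n) : Set (Fin d → EndE n) := {q | ∀ ℓ, q ℓ ∈ CI I}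

/-- `ℝ^d` identified with the tuples `(x₁·id, …, x_d·id)`. -/
def RealSet (n d : ℕ) : Set (Fin d → EndE n) := {q | ∀ ℓ, ∃ x : ℝ, q ℓ = x • (1 : EndE n)}

/-- The weak slice-cone `W = ⋃_{I ∈ 𝒞} ℂ_I^d`. -/
def Wcone (n d : ℕ) (𝒞 : Set (EndE n)) : Set (Fin d → EndE n) := ⋃ I ∈ 𝒞, CId n d I

/-- `Ω` is slice-open: `Ω ⊆ W` and for every `I ∈ 𝒞`, `Ω ∩ ℂ_I^d` is open in the
Euclidean (subspace) topology of `ℂ_I^d`. -/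
def SliceOpen (n d : ℕ) (𝒞 : Set (EndE n)) (Ω : Set (Fin d → EndE n)) : Prop :=
  Ω ⊆ Wcone n d 𝒞 ∧ ∀ I ∈ 𝒞, ∃ U : Set (Fin d → EndE n), IsOpen U ∧ Ω ∩ CId n d I = U ∩ CId n d I

/-- The slice topology `τ_s`: a set is open iff its intersection with each slice `ℂ_I^d`
(`I ∈ 𝒞`) is open in the Euclidean topology of the slice. -/
def sliceTop (n d : ℕ) (𝒞 : Set (EndE n)) : TopologicalSpace (Fin d → EndE n) :=
  ⨆ I ∈ 𝒞, TopologicalSpace.coinduced (Subtype.val : CId n d I → Fin d → EndE n) inferInstance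

/-- A slice-domain: a nonempty slice-open set, connected in the slice topology. -/
def SliceDomain (n d : ℕ) (𝒞 : Set (EndE n)) (Ω : Set (Fin d → EndE n)) : Prop :=
  SliceOpen n d 𝒞 Ω ∧ @IsConnected _ (sliceTop n d 𝒞) Ω

/-- `Ω` is real-connected: `Ω ∩ ℝ^d` is connected (empty counts as connected). -/
def RealConnected (n d : ℕ) (Ω : Set (Fin d → EndE n)) : Prop :=
  IsPreconnected (Ω ∩ RealSet n d)

lemma exists_nonzero {n : ℕ} (hn : 1 ≤ n) : ∃ w : V n, w ≠ 0 := by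
  have hi : (0:ℕ) < 2*n := by omega
  refine ⟨EuclideanSpace.single ⟨0, hi⟩ (1:ℝ), fun h => ?_⟩
  have := congrArg (fun x : V n => x ⟨0, hi⟩) h
  simp [EuclideanSpace.single_apply] at this

lemma indep_pt {n : ℕ} (hn : 1 ≤ n) {J : EndE n} (hJ : J * J = -1) {c e : ℝ}
    (hpt : ∀ w : V n, c • w + e • (J w) = 0) : c = 0 ∧ e = 0 := by
  obtain ⟨w₀, hw₀⟩ := exists_nonzero hn
  have hJJ : ∀ w : V n, J (J w) = -w := by
    intro w
    have := ContinuousLinearMap.ext_iff.mp hJ w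
    simpa [ContinuousLinearMap.mul_apply] using this
  by_cases he : e = 0
  · refine ⟨?_, he⟩
    have := hpt w₀
    rw [he, zero_smul, add_zero] at this
    rcases smul_eq_zero.mp this with h | h
    · exact h
    · exact absurd h hw₀
  · exfalso
    have hJw : ∀ w : V n, J w = (-c/e) • w := by
      intro w
      have h1 : e • J w = (-c) • w := by
        rw [neg_smul]
        have h0 := hpt w
        rw [add_comm] at h0
        exact eq_neg_of_add_eq_zero_left h0
      have h2 := congrArg (fun z => e⁻¹ • z) h1
      simp only [smul_smul, inv_mul_cancel₀ he, one_smul] at h2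
      rw [h2]
      congr 1
      field_simp
    have h3 : ((-c/e) * (-c/e) + 1) • w₀ = 0 := by
      have := hJJ w₀
      rw [hJw, hJw, smul_smul] at this
      rw [add_smul, one_smul, this]
      abel
    rcases smul_eq_zero.mp h3 with h | h
    · nlinarith [sq_nonneg (c/e)]
    · exact hw₀ h

/-- If `I, J` are complex structures and `I = a•1 + b•J`, then `a = 0` and `b*b = 1`. -/

lemma coeffs_of_cs {n : ℕ} (hn : 1 ≤ n) {I J : EndE n} (hI : I ∈ CS n) (hJ : J ∈ CS n)
    {a b : ℝ} (hab : I = a • (1 : EndE n) + b • J) : a = 0 ∧ b * b = 1 := by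
  have hJJ : ∀ w : V n, J (J w) = -w := by
    intro w
    have := ContinuousLinearMap.ext_iff.mp hJ w
    simpa [ContinuousLinearMap.mul_apply] using this
  have hII : ∀ w : V n, I (I w) = -w := by
    intro w
    have := ContinuousLinearMap.ext_iff.mp hI w
    simpa [ContinuousLinearMap.mul_apply] using this
  have hIw : ∀ w : V n, I w = a • w + b • (J w) := by
    intro w; rw [hab]; simp
  have key : ∀ w : V n, (a*a - b*b + 1) • w + (2*a*b) • (J w) = 0 := by
    intro w
    have h1 := hII w
    rw [hIw w, hIw (a • w + b • (J w))] at h1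
    simp only [map_add, map_smul, hJJ] at h1
    calc (a*a - b*b + 1) • w + (2*a*b) • (J w)
        = (a • (a • w + b • J w) + b • (a • J w + b • -w)) + w := by module
      _ = 0 := by rw [h1]; abel
  obtain ⟨h1, h2⟩ := indep_pt hn hJ key
  constructor
  · by_cases ha : a = 0
    · exact ha
    · exfalso
      have hb : b = 0 := by
        have : a * b = 0 := by linarith
        rcases mul_eq_zero.mp this with h | h
        · exact absurd h ha
        · exact h
      rw [hb] at h1; nlinarith
  · by_cases ha : a = 0
    · rw [ha] at h1; nlinarith
    · exfalso
      have hb : b = 0 := by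
        have : a * b = 0 := by linarith
        rcases mul_eq_zero.mp this with h | h
        · exact absurd h ha
        · exact h
      rw [hb] at h1; nlinarith

/-- Distinct slices only meet in real points. -/

lemma mem_real_of_mem_both {n : ℕ} (hn : 1 ≤ n) {I J : EndE n} (hI : I ∈ CS n) (hJ : J ∈ CS n)
    (hne : CI J ≠ CI I) {A : EndE n} (hAI : A ∈ CI I) (hAJ : A ∈ CI J) :
    ∃ x : ℝ, A = x • (1 : EndE n) := by
  obtain ⟨x, y, hA1⟩ := hAI
  obtain ⟨u, v, hA2⟩ := hAJ
  by_cases hy : y = 0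
  · refine ⟨x, ?_⟩
    rw [hA1, hy]
    refine ContinuousLinearMap.ext fun w => ?_
    simp
  exfalso
  apply hne
  have hIw : ∀ w : V n, I w = ((u-x)/y) • w + (v/y) • (J w) := by
    intro w
    have h0 : x • w + y • (I w) = u • w + v • (J w) := by
      have := ContinuousLinearMap.ext_iff.mp (hA1 ▸ hA2) w
      simpa using this
    have h1 : y • (I w) = (u - x) • w + v • (J w) := by
      have h1' : y • (I w) = (u • w + v • (J w)) - x • w := by
        rw [← h0]; abel
      rw [h1']; module
    have h2 := congrArg (fun z => y⁻¹ • z) h1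
    simp only [smul_add, smul_smul, inv_mul_cancel₀ hy, one_smul] at h2
    rw [h2, div_eq_inv_mul, div_eq_inv_mul]
  have hIop : I = ((u-x)/y) • (1 : EndE n) + (v/y) • J := by
    refine ContinuousLinearMap.ext fun w => ?_
    rw [hIw]
    simp
  obtain ⟨ha, hb2⟩ := coeffs_of_cs hn hI hJ hIop
  set b : ℝ := v/y with hbdef
  have hI0 : ∀ w : V n, I w = b • (J w) := by
    intro w
    rw [hIw, ha, zero_smul, zero_add]
  ext A'
  constructor
  · rintro ⟨p, q, rfl⟩
    refine ⟨p, q*b, ?_⟩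
    refine ContinuousLinearMap.ext fun w => ?_
    simp only [ContinuousLinearMap.add_apply, ContinuousLinearMap.smul_apply,
      ContinuousLinearMap.one_apply]
    rw [hI0 w, smul_smul, mul_assoc, hb2, mul_one]
  · rintro ⟨p, q, rfl⟩
    refine ⟨p, q*b, ?_⟩
    refine ContinuousLinearMap.ext fun w => ?_
    simp only [ContinuousLinearMap.add_apply, ContinuousLinearMap.smul_apply,
      ContinuousLinearMap.one_apply]
    rw [hI0 w, smul_smul]

lemma isClosed_CI {n : ℕ} (I : EndE n) : IsClosed (CI I) := by
  have hset : CI I = (Submodule.span ℝ {(1 : EndE n), I} : Submodule ℝ (EndE n)) := by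
    ext A
    simp only [CI, Set.mem_setOf_eq, SetLike.mem_coe, Submodule.mem_span_pair]
    constructor
    · rintro ⟨x, y, h⟩; exact ⟨x, y, h.symm⟩
    · rintro ⟨x, y, h⟩; exact ⟨x, y, h.symm⟩
  rw [hset]
  haveI : FiniteDimensional ℝ (Submodule.span ℝ {(1 : EndE n), I}) :=
    FiniteDimensional.span_of_finite ℝ (Set.toFinite _)
  exact Submodule.closed_of_finiteDimensional _

lemma isClosed_CId (n d : ℕ) (I : EndE n) : IsClosed (CId n d I) := by
  have hset : CId n d I = ⋂ ℓ : Fin d, (fun q : Fin d → EndE n => q ℓ) ⁻¹' (CI I) := by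
    ext q
    simp only [CId, Set.mem_setOf_eq, Set.mem_iInter, Set.mem_preimage]
  rw [hset]
  exact isClosed_iInter fun ℓ => (isClosed_CI I).preimage (continuous_apply ℓ)

lemma isClosed_RealSet (n d : ℕ) : IsClosed (RealSet n d) := by
  have h1 : IsClosed {A : EndE n | ∃ x : ℝ, A = x • (1 : EndE n)} := by
    have hset : {A : EndE n | ∃ x : ℝ, A = x • (1 : EndE n)}
        = (Submodule.span ℝ {(1 : EndE n)} : Submodule ℝ (EndE n)) := by
      ext A
      simp only [Set.mem_setOf_eq, SetLike.mem_coe, Submodule.mem_span_singleton]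
      constructor
      · rintro ⟨x, h⟩; exact ⟨x, h.symm⟩
      · rintro ⟨x, h⟩; exact ⟨x, h.symm⟩
    rw [hset]
    haveI : FiniteDimensional ℝ (Submodule.span ℝ {(1 : EndE n)}) :=
      FiniteDimensional.span_of_finite ℝ (Set.toFinite _)
    exact Submodule.closed_of_finiteDimensional _
  have hset : RealSet n d = ⋂ ℓ : Fin d,
      (fun q : Fin d → EndE n => q ℓ) ⁻¹' {A : EndE n | ∃ x : ℝ, A = x • (1 : EndE n)} := by
    ext q
    simp only [RealSet, Set.mem_setOf_eq, Set.mem_iInter, Set.mem_preimage]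
  rw [hset]
  exact isClosed_iInter fun ℓ => h1.preimage (continuous_apply ℓ)

lemma realSet_subset_CId (n d : ℕ) (I : EndE n) : RealSet n d ⊆ CId n d I := by
  intro q hq ℓ
  obtain ⟨x, hx⟩ := hq ℓ
  refine ⟨x, 0, ?_⟩
  rw [hx]
  refine ContinuousLinearMap.ext fun w => ?_
  simp

lemma CId_congr {n d : ℕ} {I J : EndE n} (h : CI I = CI J) : CId n d I = CId n d J := by
  ext q
  constructor <;> intro hq ℓ
  · rw [← h]; exact hq ℓ
  · rw [h]; exact hq ℓ

lemma CId_inter_subset_real {n d : ℕ} (hn : 1 ≤ n) {I J : EndE n} (hI : I ∈ CS n)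
    (hJ : J ∈ CS n) (hne : CI J ≠ CI I) {q : Fin d → EndE n}
    (h1 : q ∈ CId n d I) (h2 : q ∈ CId n d J) : q ∈ RealSet n d :=
  fun ℓ => mem_real_of_mem_both hn hI hJ hne (h1 ℓ) (h2 ℓ)

lemma isOpen_sliceTop_iff {n d : ℕ} (𝒞 : Set (EndE n)) (s : Set (Fin d → EndE n)) :
    @IsOpen _ (sliceTop n d 𝒞) s
      ↔ ∀ J ∈ 𝒞, IsOpen ((Subtype.val : CId n d J → Fin d → EndE n) ⁻¹' s) := by
  rw [sliceTop]
  simp only [isOpen_iSup_iff, isOpen_coinduced]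

lemma isOpen_sliceTop_of_isOpen {n d : ℕ} (𝒞 : Set (EndE n)) {s : Set (Fin d → EndE n)}
    (hs : IsOpen s) : @IsOpen _ (sliceTop n d 𝒞) s :=
  (isOpen_sliceTop_iff 𝒞 s).mpr fun _ _ => hs.preimage continuous_subtype_val

lemma sliceAux {n d : ℕ} (hn : 1 ≤ n) (𝒞 : Set (EndE n)) (hcs : 𝒞 ⊆ CS n)
    (Ω : Set (Fin d → EndE n)) (hW : Ω ⊆ Wcone n d 𝒞)
    (hpre : @IsPreconnected _ (sliceTop n d 𝒞) Ω)
    {I : EndE n} (hI : I ∈ 𝒞) {u v : Set (Fin d → EndE n)}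
    (hu : IsOpen u) (hv : IsOpen v)
    (hcov : Ω ∩ CId n d I ⊆ u ∪ v)
    (hsu : (Ω ∩ CId n d I ∩ u).Nonempty)
    (hsv : (Ω ∩ CId n d I ∩ v).Nonempty)
    (hdisj : Ω ∩ CId n d I ∩ (u ∩ v) = ∅)
    (hrv : Ω ∩ RealSet n d ∩ v = ∅) : False := by
  classical
  set B : Set (Fin d → EndE n) := Ω ∩ CId n d I ∩ v with hBdef
  set F' : Set (Fin d → EndE n) :=
    (CId n d I \ v) ∪ {q | ∃ J, (J ∈ 𝒞 ∧ CI J ≠ CI I) ∧ q ∈ CId n d J} with hF'def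
  set Q : Set (Fin d → EndE n) := (CId n d I)ᶜ ∪ u with hQdef
  have hmemF' : ∀ q ∈ Ω, (q ∈ F' ↔ q ∉ B) := by
    intro q hq
    constructor
    · rintro (⟨hqI, hqv⟩ | ⟨J, ⟨hJC, hJne⟩, hqJ⟩) hqB
      · exact hqv hqB.2
      · have hreal : q ∈ RealSet n d :=
          CId_inter_subset_real hn (hcs hI) (hcs hJC) hJne hqB.1.2 hqJ
        have hx : q ∈ Ω ∩ RealSet n d ∩ v := ⟨⟨hq, hreal⟩, hqB.2⟩
        rw [hrv] at hx
        exact hx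
    · intro hqB
      by_cases hqI : q ∈ CId n d I
      · exact Or.inl ⟨hqI, fun hqv => hqB ⟨⟨hq, hqI⟩, hqv⟩⟩
      · obtain ⟨J, hJC, hqJ⟩ : ∃ J ∈ 𝒞, q ∈ CId n d J := by
          have := hW hq
          simpa [Wcone, Set.mem_iUnion] using this
        refine Or.inr ⟨J, ⟨hJC, fun hEq => hqI ?_⟩, hqJ⟩
        rw [← CId_congr hEq]
        exact hqJ
  have hmemQ : ∀ q ∈ Ω, (q ∈ Q ↔ q ∉ B) := by
    intro q hq
    constructor
    · rintro (hqI | hqu) hqB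
      · exact hqI hqB.1.2
      · have hx : q ∈ Ω ∩ CId n d I ∩ (u ∩ v) := ⟨hqB.1, hqu, hqB.2⟩
        rw [hdisj] at hx; exact hx
    · intro hqB
      by_cases hqI : q ∈ CId n d I
      · rcases hcov ⟨hq, hqI⟩ with h | h
        · exact Or.inr h
        · exact absurd (⟨⟨hq, hqI⟩, h⟩ : q ∈ B) hqB
      · exact Or.inl hqI
  have hPopen : @IsOpen _ (sliceTop n d 𝒞) F'ᶜ := by
    rw [isOpen_sliceTop_iff]
    intro K hK
    by_cases hKI : CI K = CI I
    · have hKId : CId n d K = CId n d I := CId_congr hKI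
      by_cases hbad : ∃ J ∈ 𝒞, CI J ≠ CI I
      · have heq : (Subtype.val : CId n d K → _) ⁻¹' F'ᶜ
            = (Subtype.val : CId n d K → _) ⁻¹' (v ∩ (RealSet n d)ᶜ) := by
          ext ⟨q, hq⟩
          have hqI : q ∈ CId n d I := by rw [← hKId]; exact hq
          simp only [Set.mem_preimage, Set.mem_compl_iff, Set.mem_inter_iff]
          constructor
          · intro hF'
            obtain ⟨J₀, hJ₀C, hJ₀ne⟩ := hbad
            have h1 : q ∈ v := by
              by_contra hqv
              exact hF' (Or.inl ⟨hqI, hqv⟩)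
            exact ⟨h1, fun hreal =>
              hF' (Or.inr ⟨J₀, ⟨hJ₀C, hJ₀ne⟩, realSet_subset_CId n d J₀ hreal⟩)⟩
          · rintro ⟨hqv, hqnr⟩ (⟨_, h2⟩ | ⟨J, ⟨hJC, hJne⟩, hqJ⟩)
            · exact h2 hqv
            · exact hqnr (CId_inter_subset_real hn (hcs hI) (hcs hJC) hJne hqI hqJ)
        rw [heq]
        exact (hv.inter (isClosed_RealSet n d).isOpen_compl).preimage continuous_subtype_val
      · push_neg at hbad
        have heq : (Subtype.val : CId n d K → _) ⁻¹' F'ᶜ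
            = (Subtype.val : CId n d K → _) ⁻¹' v := by
          ext ⟨q, hq⟩
          have hqI : q ∈ CId n d I := by rw [← hKId]; exact hq
          simp only [Set.mem_preimage, Set.mem_compl_iff]
          constructor
          · intro hF'
            by_contra hqv
            exact hF' (Or.inl ⟨hqI, hqv⟩)
          · rintro hqv (⟨_, h2⟩ | ⟨J, ⟨hJC, hJne⟩, _⟩)
            · exact h2 hqv
            · exact hJne (hbad J hJC)
        rw [heq]
        exact hv.preimage continuous_subtype_val
    · have heq : (Subtype.val : CId n d K → _) ⁻¹' F'ᶜ = ∅ := by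
        ext ⟨q, hq⟩
        simp only [Set.mem_preimage, Set.mem_compl_iff, Set.mem_empty_iff_false, iff_false,
          not_not]
        exact Or.inr ⟨K, ⟨hK, hKI⟩, hq⟩
      rw [heq]
      exact isOpen_empty
  have hQopen : @IsOpen _ (sliceTop n d 𝒞) Q :=
    isOpen_sliceTop_of_isOpen 𝒞 ((isClosed_CId n d I).isOpen_compl.union hu)
  have hcov' : Ω ⊆ F'ᶜ ∪ Q := by
    intro q hq
    by_cases hqB : q ∈ B
    · exact Or.inl fun hF' => ((hmemF' q hq).mp hF') hqB
    · exact Or.inr ((hmemQ q hq).mpr hqB)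
  have hne1 : (Ω ∩ F'ᶜ).Nonempty := by
    obtain ⟨b, hb⟩ := hsv
    exact ⟨b, hb.1.1, fun hF' => ((hmemF' b hb.1.1).mp hF') hb⟩
  have hne2 : (Ω ∩ Q).Nonempty := by
    obtain ⟨a, ha⟩ := hsu
    refine ⟨a, ha.1.1, (hmemQ a ha.1.1).mpr fun haB => ?_⟩
    have hx : a ∈ Ω ∩ CId n d I ∩ (u ∩ v) := ⟨ha.1, ha.2, haB.2⟩
    rw [hdisj] at hx; exact hx
  obtain ⟨q, hqΩ, hqP, hqQ⟩ := hpre F'ᶜ Q hPopen hQopen hcov' hne1 hne2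
  have hqB : q ∈ B := by
    by_contra h
    exact hqP ((hmemF' q hqΩ).mpr h)
  exact ((hmemQ q hqΩ).mp hqQ) hqB

/-- For a real-connected slice-domain Ω, each Ω ∩ ℂ_I^d is open and connected in the
Euclidean topology of ℂ_I^d (the empty set counting as connected). -/
theorem sliceDomain_slices_open_connected (n d : ℕ) (hn : 1 ≤ n) (hd : 1 ≤ d)
    (𝒞 : Set (EndE n)) (h𝒞 : 𝒞.Nonempty) (hsym : ∀ I ∈ 𝒞, -I ∈ 𝒞) (hcs : 𝒞 ⊆ CS n)
    (Ω : Set (Fin d → EndE n)) (hΩ : SliceDomain n d 𝒞 Ω) (hrc : RealConnected n d Ω) :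
    ∀ I ∈ 𝒞,
      (∃ U : Set (Fin d → EndE n), IsOpen U ∧ Ω ∩ CId n d I = U ∩ CId n d I) ∧
      IsPreconnected (Ω ∩ CId n d I) := by
  obtain ⟨⟨hW, hopen⟩, hΩne, hpre⟩ := hΩ
  intro I hI
  refine ⟨hopen I hI, ?_⟩
  intro u v hu hv hcov hsu hsv
  by_contra hempty
  rw [Set.not_nonempty_iff_eq_empty] at hempty
  have hRsub : Ω ∩ RealSet n d ⊆ u ∪ v := fun q hq =>
    hcov ⟨hq.1, realSet_subset_CId n d I hq.2⟩
  have hcase : Ω ∩ RealSet n d ∩ v = ∅ ∨ Ω ∩ RealSet n d ∩ u = ∅ := by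
    by_contra h
    push_neg at h
    obtain ⟨h1, h2⟩ := h
    obtain ⟨q, hq⟩ := hrc u v hu hv hRsub h2 h1
    have hx : q ∈ Ω ∩ CId n d I ∩ (u ∩ v) :=
      ⟨⟨hq.1.1, realSet_subset_CId n d I hq.1.2⟩, hq.2⟩
    rw [hempty] at hx
    exact hx
  rcases hcase with hrv | hru
  · exact sliceAux hn 𝒞 hcs Ω hW hpre hI hu hv hcov hsu hsv hempty hrv
  · refine sliceAux hn 𝒞 hcs Ω hW hpre hI hv hu ?_ hsv hsu ?_ hru
    · rwa [Set.union_comm]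
    · rwa [Set.inter_comm v u]
end
end

section
/- Let Ω be a real-connected slice-domain in W and let f, g : Ω → ℝ^{2n} be weak slice regular. (i) If Ω ∩ ℝ^d ≠ ∅ and f = g on a nonempty subset of Ω ∩ ℝ^d that is open in ℝ^d, then f = g on Ω. (ii) If f = g on a nonempty subset of Ω ∩ ℂ_I^d that is open in ℂ_I^d, for some I ∈ 𝒞, then f = g on Ω. -/
noncomputable section

/-- Φ_I : ℝ^d × ℝ^d → [End(ℝ^{2n})]^d, (x, y) ↦ (x₁·id + y₁·I, …, x_d·id + y_d·I). -/
def Phi (n d : ℕ) (I : EndE n) : (Fin d → ℝ) × (Fin d → ℝ) → Fin d → EndE n :=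
  fun p ℓ => p.1 ℓ • (1 : EndE n) + p.2 ℓ • I

/-- The standard basis direction in the x-coordinates. -/
def ex (d : ℕ) (ℓ : Fin d) : (Fin d → ℝ) × (Fin d → ℝ) := (Pi.single ℓ 1, 0)

/-- The standard basis direction in the y-coordinates. -/
def ey (d : ℕ) (ℓ : Fin d) : (Fin d → ℝ) × (Fin d → ℝ) := (0, Pi.single ℓ 1)

/-- f is weak slice regular on Ω: for every I ∈ 𝒞, f ∘ Φ_I is (Fréchet, real)
differentiable on Φ_I⁻¹(Ω) and satisfies the Cauchy–Riemann equations
∂(f∘Φ_I)/∂x_ℓ + I(∂(f∘Φ_I)/∂y_ℓ) = 0 there, for ℓ = 1, …, d. -/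
def WSRegular (n d : ℕ) (𝒞 : Set (EndE n)) (Ω : Set (Fin d → EndE n))
    (f : (Fin d → EndE n) → V n) : Prop :=
  ∀ I ∈ 𝒞, DifferentiableOn ℝ (f ∘ Phi n d I) (Phi n d I ⁻¹' Ω) ∧
    ∀ p ∈ Phi n d I ⁻¹' Ω, ∀ ℓ : Fin d,
      fderiv ℝ (f ∘ Phi n d I) p (ex d ℓ) + I (fderiv ℝ (f ∘ Phi n d I) p (ey d ℓ)) = 0

open Metric Set Filter Function
open scoped Topology

/-- Phi as a continuous linear map. -/
def PhiL (n d : ℕ) (I : EndE n) : ((Fin d → ℝ) × (Fin d → ℝ)) →L[ℝ] (Fin d → EndE n) :=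
  ContinuousLinearMap.pi fun ℓ =>
    (((ContinuousLinearMap.proj ℓ).comp (ContinuousLinearMap.fst ℝ _ _)).smulRight (1 : EndE n)) +
    (((ContinuousLinearMap.proj ℓ).comp (ContinuousLinearMap.snd ℝ _ _)).smulRight I)

lemma PhiL_eq (n d : ℕ) (I : EndE n) : ⇑(PhiL n d I) = Phi n d I := by
  funext p; funext ℓ; simp [PhiL, Phi]

def iotaL (d : ℕ) : (Fin d → ℂ) →L[ℝ] (Fin d → ℝ) × (Fin d → ℝ) :=
  (ContinuousLinearMap.pi fun ℓ => Complex.reCLM.comp (ContinuousLinearMap.proj ℓ)).prod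
  (ContinuousLinearMap.pi fun ℓ => Complex.imCLM.comp (ContinuousLinearMap.proj ℓ))

def PsiL (n d : ℕ) (I : EndE n) : (Fin d → ℂ) →L[ℝ] (Fin d → EndE n) :=
  (PhiL n d I).comp (iotaL d)

lemma PsiL_apply (I : EndE n) (z : Fin d → ℂ) (ℓ : Fin d) :
    PsiL n d I z ℓ = (z ℓ).re • (1 : EndE n) + (z ℓ).im • I := by
  simp [PsiL, PhiL, iotaL]

lemma Vn_nontrivial (hn : 1 ≤ n) : Nontrivial (V n) := by
  haveI : Inhabited (Fin (2 * n)) := ⟨⟨0, by omega⟩⟩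
  exact inferInstance

lemma indep (hn : 1 ≤ n) {J : EndE n} (hJ : J * J = -1) {x y : ℝ}
    (h : x • (1 : EndE n) + y • J = 0) : x = 0 ∧ y = 0 := by
  haveI := Vn_nontrivial hn
  obtain ⟨v₀, hv₀⟩ := exists_ne (0 : V n)
  by_cases hy : y = 0
  · subst hy
    have hx : x • v₀ = (0 : V n) := by
      have := DFunLike.congr_fun h v₀
      simpa using this
    rcases smul_eq_zero.1 hx with h' | h'
    · exact ⟨h', rfl⟩
    · exact absurd h' hv₀
  · exfalso
    have hJv : ∀ v : V n, J v = (-(x / y)) • v := by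
      intro v
      have h1 := DFunLike.congr_fun h v
      simp only [ContinuousLinearMap.add_apply, ContinuousLinearMap.smul_apply,
        ContinuousLinearMap.one_apply, ContinuousLinearMap.zero_apply] at h1
      have h2 : y • J v = -(x • v) := by
        rw [eq_neg_iff_add_eq_zero, add_comm]; exact h1
      calc J v = y⁻¹ • (y • J v) := by rw [smul_smul, inv_mul_cancel₀ hy, one_smul]
        _ = y⁻¹ • -(x • v) := by rw [h2]
        _ = (-(x / y)) • v := by
            rw [smul_neg, smul_smul, ← neg_smul]
            congr 1
            field_simp
    have h2 : ((x / y) * (x / y)) • v₀ = -v₀ := by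
      have h3 := DFunLike.congr_fun hJ v₀
      simp only [ContinuousLinearMap.mul_apply, ContinuousLinearMap.neg_apply,
        ContinuousLinearMap.one_apply] at h3
      rw [hJv, hJv, smul_smul, neg_mul_neg] at h3
      exact h3
    have h3 : ((x / y) * (x / y) + 1) • v₀ = 0 := by
      rw [add_smul, one_smul, h2]; simp
    rcases smul_eq_zero.1 h3 with h' | h'
    · nlinarith
    · exact hv₀ h'

lemma psiL_injective (hn : 1 ≤ n) {J : EndE n} (hJ : J * J = -1) :
    Function.Injective (PsiL n d J) := by
  intro z w h
  funext ℓ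
  have h1 := congrFun h ℓ
  rw [PsiL_apply, PsiL_apply] at h1
  have h2 : ((z ℓ).re - (w ℓ).re) • (1 : EndE n) + ((z ℓ).im - (w ℓ).im) • J = 0 := by
    rw [← sub_eq_zero] at h1
    rw [← h1]; module
  obtain ⟨hre, him⟩ := indep hn hJ h2
  exact Complex.ext (by linarith [sub_eq_zero.1 (by exact hre)]) (by linarith)

lemma mem_CId_iff {J : EndE n} (q : Fin d → EndE n) :
    q ∈ CId n d J ↔ ∃ z : Fin d → ℂ, PsiL n d J z = q := by
  constructor
  · intro hq
    choose x y hxy using hq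
    refine ⟨fun ℓ => ⟨x ℓ, y ℓ⟩, funext fun ℓ => ?_⟩
    rw [PsiL_apply, hxy ℓ]
  · rintro ⟨z, rfl⟩ ℓ
    exact ⟨(z ℓ).re, (z ℓ).im, (PsiL_apply J z ℓ)⟩

lemma psiL_mem_CId {J : EndE n} (z : Fin d → ℂ) : PsiL n d J z ∈ CId n d J :=
  (mem_CId_iff _).2 ⟨z, rfl⟩

/-- real tuples map to RealSet and conversely. -/
lemma psiL_mem_RealSet_iff (hn : 1 ≤ n) {J : EndE n} (hJ : J * J = -1) (z : Fin d → ℂ) :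
    PsiL n d J z ∈ RealSet n d ↔ ∀ ℓ, (z ℓ).im = 0 := by
  constructor
  · intro hz ℓ
    obtain ⟨x, hx⟩ := hz ℓ
    rw [PsiL_apply] at hx
    have h2 : ((z ℓ).re - x) • (1 : EndE n) + (z ℓ).im • J = 0 := by
      rw [← sub_eq_zero] at hx
      rw [← hx]; module
    exact (indep hn hJ h2).2
  · intro hz ℓ
    exact ⟨(z ℓ).re, by rw [PsiL_apply, hz ℓ]; module⟩

lemma realSet_eq_psiL {J : EndE n} (q : Fin d → EndE n) (hq : q ∈ RealSet n d) :
    ∃ z : Fin d → ℂ, (∀ ℓ, (z ℓ).im = 0) ∧ PsiL n d J z = q := by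
  choose x hx using hq
  refine ⟨fun ℓ => (x ℓ : ℂ), fun ℓ => Complex.ofReal_im _, funext fun ℓ => ?_⟩
  rw [PsiL_apply, hx ℓ]
  norm_num
  module

lemma norm_one_endE (hn : 1 ≤ n) : ‖(1 : EndE n)‖ = 1 := by
  haveI := Vn_nontrivial hn
  rw [ContinuousLinearMap.one_def]
  exact ContinuousLinearMap.norm_id

/-- On real tuples, `PsiL` is isometric. -/
lemma psiL_real_dist (hn : 1 ≤ n) {J : EndE n} {z w : Fin d → ℂ}
    (hz : ∀ ℓ, (z ℓ).im = 0) (hw : ∀ ℓ, (w ℓ).im = 0) :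
    dist (PsiL n d J z) (PsiL n d J w) = dist z w := by
  rw [dist_pi_def, dist_pi_def]
  congr 1
  apply Finset.sup_congr rfl
  intro ℓ _
  apply NNReal.eq
  show dist (PsiL n d J z ℓ) (PsiL n d J w ℓ) = dist (z ℓ) (w ℓ)
  rw [PsiL_apply, PsiL_apply, hz ℓ, hw ℓ]
  have e1 : (z ℓ).re • (1 : EndE n) + (0:ℝ) • J = (z ℓ).re • (1 : EndE n) := by module
  have e2 : (w ℓ).re • (1 : EndE n) + (0:ℝ) • J = (w ℓ).re • (1 : EndE n) := by module
  rw [e1, e2, dist_eq_norm]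
  have e3 : (z ℓ).re • (1 : EndE n) - (w ℓ).re • (1 : EndE n) = ((z ℓ).re - (w ℓ).re) • (1 : EndE n) := by module
  rw [e3]
  rw [show ‖((z ℓ).re - (w ℓ).re) • (1 : EndE n)‖ = ‖(z ℓ).re - (w ℓ).re‖ * ‖(1:EndE n)‖ from norm_smul ((z ℓ).re - (w ℓ).re) (1 : EndE n), norm_one_endE hn, mul_one]
  rw [Complex.dist_of_im_eq (by rw [hz ℓ, hw ℓ])]
  rw [Real.dist_eq]
  rfl

def Tk (n : ℕ) (J : EndE n) (k : Fin (2*n)) : V n →L[ℝ] ℂ :=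
  Complex.ofRealCLM.comp (EuclideanSpace.proj k) -
    Complex.I • (Complex.ofRealCLM.comp ((EuclideanSpace.proj k).comp J))

lemma Tk_apply (J : EndE n) (k : Fin (2*n)) (v : V n) :
    Tk n J k v = ((v k : ℂ)) - Complex.I * ((J v) k : ℂ) := by
  simp [Tk, Complex.real_smul]

lemma Tk_zero (J : EndE n) (v : V n) (h : ∀ k, Tk n J k v = 0) : v = 0 := by
  ext k
  have h1 := congrArg Complex.re (h k)
  rw [Tk_apply] at h1
  simpa using h1

lemma phi_mem_CId (J : EndE n) (p : (Fin d → ℝ) × (Fin d → ℝ)) : Phi n d J p ∈ CId n d J :=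
  fun ℓ => ⟨p.1 ℓ, p.2 ℓ, rfl⟩

lemma phi_preimage_open {𝒞 : Set (EndE n)} {Ω : Set (Fin d → EndE n)} {J : EndE n}
    (hΩo : SliceOpen n d 𝒞 Ω) (hJ𝒞 : J ∈ 𝒞) : IsOpen (Phi n d J ⁻¹' Ω) := by
  obtain ⟨U, hU, hEq⟩ := hΩo.2 J hJ𝒞
  have heq : Phi n d J ⁻¹' Ω = Phi n d J ⁻¹' U := by
    ext p
    simp only [Set.mem_preimage]
    constructor
    · intro h
      have : Phi n d J p ∈ U ∩ CId n d J := by rw [← hEq]; exact ⟨h, phi_mem_CId J p⟩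
      exact this.1
    · intro h
      have : Phi n d J p ∈ Ω ∩ CId n d J := by rw [hEq]; exact ⟨h, phi_mem_CId J p⟩
      exact this.1
  rw [heq, ← PhiL_eq]
  exact hU.preimage (PhiL n d J).continuous

lemma psiL_eq_phi_iotaL (J : EndE n) (z : Fin d → ℂ) :
    PsiL n d J z = Phi n d J (iotaL d z) := by
  rw [← PhiL_eq]; rfl

lemma psi_preimage_open {𝒞 : Set (EndE n)} {Ω : Set (Fin d → EndE n)} {J : EndE n}
    (hΩo : SliceOpen n d 𝒞 Ω) (hJ𝒞 : J ∈ 𝒞) : IsOpen (⇑(PsiL n d J) ⁻¹' Ω) := by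
  have : ⇑(PsiL n d J) ⁻¹' Ω = ⇑(iotaL d) ⁻¹' (Phi n d J ⁻¹' Ω) := by
    ext z
    simp only [Set.mem_preimage, psiL_eq_phi_iotaL]
  rw [this]
  exact (phi_preimage_open hΩo hJ𝒞).preimage (iotaL d).continuous

lemma iotaL_single_one (ℓ : Fin d) : iotaL d (Pi.single ℓ (1:ℂ)) = ex d ℓ := by
  refine Prod.ext ?_ ?_ <;>
  · funext j
    by_cases h : j = ℓ <;> simp [iotaL, ex, Pi.single_apply, h]

lemma iotaL_single_I (ℓ : Fin d) : iotaL d (Pi.single ℓ (Complex.I)) = ey d ℓ := by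
  refine Prod.ext ?_ ?_ <;>
  · funext j
    by_cases h : j = ℓ <;> simp [iotaL, ey, Pi.single_apply, h]

lemma single_decomp (ℓ : Fin d) (c : ℂ) :
    (Pi.single ℓ c : Fin d → ℂ) =
      c.re • (Pi.single ℓ (1:ℂ) : Fin d → ℂ) + c.im • (Pi.single ℓ Complex.I : Fin d → ℂ) := by
  funext j
  by_cases h : j = ℓ
  · subst h
    simp only [Pi.single_eq_same, Pi.add_apply, Pi.smul_apply, Complex.real_smul]
    rw [mul_one, Complex.re_add_im]
  · simp [Pi.single_apply, h]

lemma neg_of_JJ {J : EndE n} (hJcs : J * J = -1) (w : V n) : J (J w) = -w := by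
  have := DFunLike.congr_fun hJcs w
  simpa [ContinuousLinearMap.mul_apply] using this

/-- pointwise extensionality for real-CLMs on `Fin d → ℂ` via complex basis vectors -/
lemma clm_pi_ext {A B : (Fin d → ℂ) →L[ℝ] ℂ}
    (h1 : ∀ ℓ, A (Pi.single ℓ (1:ℂ)) = B (Pi.single ℓ (1:ℂ)))
    (hI : ∀ ℓ, A (Pi.single ℓ Complex.I) = B (Pi.single ℓ Complex.I)) (v : Fin d → ℂ) :
    A v = B v := by
  have hv : v = ∑ ℓ : Fin d, Pi.single ℓ (v ℓ) := (Finset.univ_sum_single v).symm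
  rw [hv, map_sum, map_sum]
  refine Finset.sum_congr rfl fun ℓ _ => ?_
  rw [single_decomp ℓ (v ℓ), map_add, map_add, map_smul, map_smul, map_smul, map_smul,
    h1 ℓ, hI ℓ]

/-- The main Cauchy-Riemann consequence: complex differentiability of the scalarized
slice functions. -/
lemma tk_diff {𝒞 : Set (EndE n)} {Ω : Set (Fin d → EndE n)} {f : (Fin d → EndE n) → V n}
    {J : EndE n} (hΩo : SliceOpen n d 𝒞 Ω) (hJ𝒞 : J ∈ 𝒞) (hJcs : J * J = -1)
    (hf : WSRegular n d 𝒞 Ω f) (k : Fin (2*n)) :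
    ∀ z ∈ ⇑(PsiL n d J) ⁻¹' Ω,
      DifferentiableAt ℂ (fun w => Tk n J k (f (PsiL n d J w))) z := by
  intro z hz
  obtain ⟨hfd, hcr⟩ := hf J hJ𝒞
  have hopen := phi_preimage_open hΩo hJ𝒞
  have hmem : iotaL d z ∈ Phi n d J ⁻¹' Ω := by
    rw [Set.mem_preimage, ← psiL_eq_phi_iotaL]; exact hz
  have hdiff : DifferentiableAt ℝ (f ∘ Phi n d J) (iotaL d z) :=
    hfd.differentiableAt (hopen.mem_nhds hmem)
  set L := fderiv ℝ (f ∘ Phi n d J) (iotaL d z) with hLdef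
  have hL1 : HasFDerivAt (f ∘ Phi n d J) L (iotaL d z) := hdiff.hasFDerivAt
  have hL2 : HasFDerivAt (fun w => f (Phi n d J (iotaL d w))) (L.comp (iotaL d)) z :=
    hL1.comp z (iotaL d).hasFDerivAt
  have hL3 : HasFDerivAt (fun w => Tk n J k (f (Phi n d J (iotaL d w))))
      ((Tk n J k).comp (L.comp (iotaL d))) z := (Tk n J k).hasFDerivAt.comp z hL2
  set M := (Tk n J k).comp (L.comp (iotaL d)) with hMdef
  -- the key CR computation
  have hkey : ∀ ℓ : Fin d, Tk n J k (L (ey d ℓ)) = Complex.I * Tk n J k (L (ex d ℓ)) := by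
    intro ℓ
    have hcr' := hcr (iotaL d z) hmem ℓ
    have hA : L (ex d ℓ) = -(J (L (ey d ℓ))) := eq_neg_of_add_eq_zero_left hcr'
    set B := L (ey d ℓ) with hBdef
    rw [hA, Tk_apply, Tk_apply, map_neg, neg_of_JJ hJcs, neg_neg]
    have hBk : ((-(J B) : V n) k : ℂ) = -((J B) k : ℂ) := by
      push_cast [PiLp.neg_apply]; ring
    rw [hBk]
    ring_nf
    rw [Complex.I_sq]
    ring
  -- M is complex-linear
  have hMi : ∀ v, M (Complex.I • v) = Complex.I * M v := by
    intro v
    have hAB := clm_pi_ext (A := M.comp (Complex.I • ContinuousLinearMap.id ℝ (Fin d → ℂ)))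
        (B := Complex.I • M) ?_ ?_ v
    · simpa using hAB
    · intro ℓ
      have h1 : (Complex.I • (Pi.single ℓ (1:ℂ) : Fin d → ℂ)) = Pi.single ℓ Complex.I := by
        rw [← Pi.single_smul]; simp
      simp only [ContinuousLinearMap.coe_comp', Function.comp_apply,
        ContinuousLinearMap.smul_apply, ContinuousLinearMap.coe_id', id_eq]
      rw [h1, hMdef]
      simp only [ContinuousLinearMap.coe_comp', Function.comp_apply]
      rw [iotaL_single_I, iotaL_single_one]
      rw [hkey ℓ]
      rw [smul_eq_mul]
    · intro ℓ
      have h1 : (Complex.I • (Pi.single ℓ Complex.I : Fin d → ℂ)) = -(Pi.single ℓ (1:ℂ)) := by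
        rw [← Pi.single_smul]
        rw [smul_eq_mul, Complex.I_mul_I]
        funext j
        by_cases h : j = ℓ <;> simp [Pi.single_apply, h]
      simp only [ContinuousLinearMap.coe_comp', Function.comp_apply,
        ContinuousLinearMap.smul_apply, ContinuousLinearMap.coe_id', id_eq]
      rw [h1, map_neg, hMdef]
      simp only [ContinuousLinearMap.coe_comp', Function.comp_apply]
      rw [iotaL_single_I, iotaL_single_one, hkey ℓ, smul_eq_mul]
      ring_nf
      rw [Complex.I_sq]
      ring
  have hMc : ∀ (c : ℂ) (v : Fin d → ℂ), M (c • v) = c * M v := by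
    intro c v
    have hdecomp : c • v = (c.re : ℝ) • v + (c.im : ℝ) • (Complex.I • v) := by
      calc c • v = ((c.re:ℂ) + (c.im:ℂ) * Complex.I) • v := by rw [Complex.re_add_im]
        _ = (c.re:ℂ) • v + ((c.im:ℂ) * Complex.I) • v := add_smul _ _ _
        _ = (c.re : ℝ) • v + (c.im : ℝ) • (Complex.I • v) := by
            rw [mul_smul, Complex.coe_smul, Complex.coe_smul]
    rw [hdecomp, map_add, M.map_smul, M.map_smul, hMi v]
    rw [Complex.real_smul, Complex.real_smul]
    nth_rewrite 3 [← Complex.re_add_im c]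
    ring
  -- build the complex-linear continuous map
  let Mc : (Fin d → ℂ) →ₗ[ℂ] ℂ :=
    { toFun := M
      map_add' := M.map_add
      map_smul' := fun c v => by simpa using hMc c v }
  have hfd2 : HasFDerivAt (fun w => Tk n J k (f (PsiL n d J w)))
      (LinearMap.toContinuousLinearMap Mc) z := by
    have hcoe : ⇑(LinearMap.toContinuousLinearMap Mc) = ⇑M := rfl
    have h4 : HasFDerivAt (fun w => Tk n J k (f (PsiL n d J w))) M z := by
      have : (fun w => Tk n J k (f (PsiL n d J w)))
          = (fun w => Tk n J k (f (Phi n d J (iotaL d w)))) := by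
        funext w; rw [psiL_eq_phi_iotaL]
      rw [this]; exact hL3
    rw [hasFDerivAt_iff_isLittleO_nhds_zero] at h4 ⊢
    rw [hcoe]
    exact h4
  exact hfd2.differentiableAt

/-- Update as an affine map is complex-differentiable. -/
lemma diff_update {h : (Fin d → ℂ) → ℂ} {w : Fin d → ℂ} {κ : Fin d} {ζ : ℂ}
    (hd : DifferentiableAt ℂ h (Function.update w κ ζ)) :
    DifferentiableAt ℂ (fun t => h (Function.update w κ t)) ζ := by
  have heq : (fun t : ℂ => Function.update w κ t)
      = (fun t : ℂ => w + (t - w κ) • (Pi.single κ (1:ℂ) : Fin d → ℂ)) := by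
    funext t; funext j
    by_cases hj : j = κ
    · subst hj; simp
    · simp [Function.update_apply, Pi.single_apply, hj]
  have hdaff : DifferentiableAt ℂ (fun t : ℂ => Function.update w κ t) ζ := by
    rw [heq]
    exact (differentiableAt_const _).add
      (((differentiableAt_id.sub (differentiableAt_const _))).smul_const _)
  have := hd.comp ζ hdaff
  exact this

/-- KEY: a holomorphic function on a polydisc (= pi-ball) vanishing on a product of sets each
with an interior accumulation point vanishes on the whole polydisc. -/
lemma key_polydisc {h : (Fin d → ℂ) → ℂ} {z₀ : Fin d → ℂ} {r : ℝ} (hr : 0 < r)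
    (hdiff : ∀ z ∈ Metric.ball z₀ r, DifferentiableAt ℂ h z)
    (s : Fin d → Set ℂ) (a : Fin d → ℂ) (ha : ∀ ℓ, a ℓ ∈ Metric.ball (z₀ ℓ) r)
    (hs : ∀ ℓ, s ℓ ⊆ Metric.ball (z₀ ℓ) r)
    (hacc : ∀ ℓ, ∃ᶠ ζ in 𝓝[≠] (a ℓ), ζ ∈ s ℓ)
    (hvan : ∀ w : Fin d → ℂ, (∀ ℓ, w ℓ ∈ s ℓ) → h w = 0) :
    ∀ w ∈ Metric.ball z₀ r, h w = 0 := by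
  have main : ∀ k : ℕ, ∀ w : Fin d → ℂ, (∀ ℓ, dist (w ℓ) (z₀ ℓ) < r) →
      (∀ ℓ : Fin d, k ≤ ℓ.val → w ℓ ∈ s ℓ) → h w = 0 := by
    intro k
    induction k with
    | zero => exact fun w _ hw => hvan w fun ℓ => hw ℓ (Nat.zero_le _)
    | succ k ih =>
      intro w hwball hws
      by_cases hk : k < d
      · set κ : Fin d := ⟨k, hk⟩ with hκ
        set g : ℂ → ℂ := fun ζ => h (Function.update w κ ζ) with hg
        have hupdate_ball : ∀ ζ ∈ Metric.ball (z₀ κ) r,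
            ∀ ℓ, dist (Function.update w κ ζ ℓ) (z₀ ℓ) < r := by
          intro ζ hζ ℓ
          by_cases hℓ : ℓ = κ
          · subst hℓ; simpa [Function.update_self] using hζ
          · rw [Function.update_of_ne hℓ]; exact hwball ℓ
        have hgd : DifferentiableOn ℂ g (Metric.ball (z₀ κ) r) := by
          intro ζ hζ
          have : Function.update w κ ζ ∈ Metric.ball z₀ r :=
            (dist_pi_lt_iff hr).2 (hupdate_ball ζ hζ)
          exact (diff_update (hdiff _ this)).differentiableWithinAt
        have hgan : AnalyticOnNhd ℂ g (Metric.ball (z₀ κ) r) :=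
          hgd.analyticOnNhd Metric.isOpen_ball
        have hfreq : ∃ᶠ ζ in 𝓝[≠] (a κ), g ζ = 0 := by
          refine (hacc κ).mono fun ζ hζ => ?_
          refine ih _ (hupdate_ball ζ (hs κ hζ)) ?_
          intro ℓ hℓ
          by_cases hℓκ : ℓ = κ
          · subst hℓκ; rwa [Function.update_self]
          · rw [Function.update_of_ne hℓκ]
            refine hws ℓ ?_
            have hκv : (κ : ℕ) = k := rfl
            rcases Nat.lt_or_ge ℓ.val (k+1) with h' | h'
            · exfalso; exact hℓκ (Fin.ext (by omega))
            · exact h'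
        have hzero : Set.EqOn g 0 (Metric.ball (z₀ κ) r) :=
          hgan.eqOn_zero_of_preconnected_of_frequently_eq_zero
            (convex_ball _ _).isPreconnected (ha κ) hfreq
        have hwκ : w κ ∈ Metric.ball (z₀ κ) r := hwball κ
        have := hzero hwκ
        rw [hg] at this
        simpa [Function.update_eq_self] using this
      · refine ih w hwball fun ℓ hℓ => ?_
        exfalso; have := ℓ.isLt; omega
  intro w hw
  exact main d w (fun ℓ => (dist_pi_lt_iff hr).1 hw ℓ) (fun ℓ hℓ => absurd ℓ.isLt (by omega))

/-- Frequently-in-small-ball helper. -/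
lemma freq_ball (c : ℂ) {ε : ℝ} (hε : 0 < ε) : ∃ᶠ ζ in 𝓝[≠] c, ζ ∈ Metric.ball c ε :=
  Filter.Eventually.frequently
    (eventually_nhdsWithin_of_eventually_nhds (Metric.eventually_nhds_iff_ball.2 ⟨ε, hε, fun y hy => hy⟩))

/-- PROP: propagation of vanishing along a connected open set. -/
lemma prop_connected {h : (Fin d → ℂ) → ℂ} {Vs : Set (Fin d → ℂ)} (hV : IsOpen Vs)
    (hc : IsPreconnected Vs) (hdiff : ∀ z ∈ Vs, DifferentiableAt ℂ h z)
    {z₀ : Fin d → ℂ} (hz₀ : z₀ ∈ Vs) (hev : ∀ᶠ w in 𝓝 z₀, h w = 0) :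
    ∀ z ∈ Vs, h z = 0 := by
  set u : Set (Fin d → ℂ) := {z | ∀ᶠ w in 𝓝 z, h w = 0} with hu
  have huo : IsOpen u := isOpen_setOf_eventually_nhds
  have hclos : closure u ∩ Vs ⊆ u := by
    rintro z ⟨hzc, hzV⟩
    obtain ⟨r, hr, hball⟩ := Metric.isOpen_iff.1 hV z hzV
    obtain ⟨c, hcu, hcd⟩ := Metric.mem_closure_iff.1 hzc (r/2) (by linarith)
    obtain ⟨ε₀, hε₀, hcball⟩ := Metric.eventually_nhds_iff_ball.1 hcu
    have hDpos : 0 < r - dist c z := by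
      rw [dist_comm] at hcd; linarith
    set ε : ℝ := min ε₀ ((r - dist c z)/2) with hε
    have hεpos : 0 < ε := lt_min hε₀ (by linarith)
    have hconc : ∀ w ∈ Metric.ball z r, h w = 0 := by
      refine key_polydisc hr (fun w hw => hdiff w (hball hw)) (fun ℓ => Metric.ball (c ℓ) ε) c
        (fun ℓ => lt_of_le_of_lt (dist_le_pi_dist c z ℓ) (by rw [dist_comm] at hcd; linarith))
        ?_ (fun ℓ => freq_ball (c ℓ) hεpos) ?_
      · intro ℓ x hx
        simp only [Metric.mem_ball] at *
        have h1 : dist x (z ℓ) ≤ dist x (c ℓ) + dist (c ℓ) (z ℓ) := dist_triangle _ _ _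
        have h2 : dist (c ℓ) (z ℓ) ≤ dist c z := dist_le_pi_dist c z ℓ
        have h3 : ε ≤ (r - dist c z)/2 := min_le_right _ _
        linarith
      · intro w hw
        have : dist w c < ε := (dist_pi_lt_iff hεpos).2 hw
        exact hcball w (Metric.mem_ball.2 (lt_of_lt_of_le this (min_le_left _ _)))
    exact Metric.eventually_nhds_iff_ball.2 ⟨r, hr, hconc⟩
  have hsub : Vs ⊆ u := hc.subset_of_closure_inter_subset huo ⟨z₀, hz₀, hev⟩ hclos
  intro z hz
  exact (hsub hz).self_of_nhds

lemma CI_neg (J : EndE n) : CI (-J) = CI J := by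
  ext A
  constructor
  · rintro ⟨x, y, rfl⟩
    exact ⟨x, -y, by module⟩
  · rintro ⟨x, y, rfl⟩
    exact ⟨x, -y, by module⟩

lemma CId_neg (J : EndE n) : CId n d (-J) = CId n d J := by
  unfold CId; rw [CI_neg]

/-- Distinct slices intersect in the reals. -/
lemma slice_inter (hn : 1 ≤ n) {I J : EndE n} (hI : I * I = -1) (hJ : J * J = -1)
    (hne1 : J ≠ I) (hne2 : J ≠ -I) {A : EndE n} (hAJ : A ∈ CI J) (hAI : A ∈ CI I) :
    ∃ x : ℝ, A = x • (1 : EndE n) := by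
  obtain ⟨x, y, hA1⟩ := hAJ
  obtain ⟨x', y', hA2⟩ := hAI
  by_cases hy : y = 0
  · subst hy
    refine ⟨x, by rw [hA1]; module⟩
  · exfalso
    have h3 : x • (1 : EndE n) + y • J = x' • (1 : EndE n) + y' • I := by rw [← hA1, ← hA2]
    set α : ℝ := y⁻¹ * (x' - x) with hα
    set β : ℝ := y⁻¹ * y' with hβ
    have hJop : J = α • (1 : EndE n) + β • I := by
      have h4 : y • J = (x' - x) • (1 : EndE n) + y' • I := by
        rw [← sub_eq_zero] at h3 ⊢
        rw [← h3]; module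
      calc J = y⁻¹ • (y • J) := by rw [smul_smul, inv_mul_cancel₀ hy, one_smul]
        _ = y⁻¹ • ((x' - x) • (1 : EndE n) + y' • I) := by rw [h4]
        _ = α • (1 : EndE n) + β • I := by rw [hα, hβ]; module
    have hexp : ∀ v : V n, (α * α - β * β) • v + (2*α*β) • (I v) = -v := by
      intro v
      have h5 := DFunLike.congr_fun hJ v
      rw [hJop] at h5
      simp only [ContinuousLinearMap.mul_apply, ContinuousLinearMap.add_apply,
        ContinuousLinearMap.smul_apply, ContinuousLinearMap.one_apply,
        ContinuousLinearMap.neg_apply, map_add, map_smul] at h5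
      rw [neg_of_JJ hI v] at h5
      rw [← h5]; module
    have hop : (α * α - β * β + 1) • (1 : EndE n) + (2*α*β) • I = 0 := by
      apply ContinuousLinearMap.ext
      intro v
      have := hexp v
      simp only [ContinuousLinearMap.add_apply, ContinuousLinearMap.smul_apply,
        ContinuousLinearMap.one_apply, ContinuousLinearMap.zero_apply]
      rw [← sub_eq_zero] at this
      rw [← this]; module
    obtain ⟨h6, h7⟩ := indep hn hI hop
    by_cases hαz : α = 0
    · have hβ2 : β * β = 1 := by nlinarith
      have : β = 1 ∨ β = -1 := by
        rcases mul_self_eq_one_iff.1 hβ2 with h | h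
        · exact Or.inl h
        · exact Or.inr h
      rcases this with h | h
      · apply hne1
        rw [hJop, hαz, h]; module
      · apply hne2
        rw [hJop, hαz, h]; module
    · have : 2 * α * β = 0 := h7
      have hβz : β = 0 := by
        rcases mul_eq_zero.1 this with h | h
        · rcases mul_eq_zero.1 h with h | h
          · norm_num at h
          · exact absurd h hαz
        · exact h
      rw [hβz] at h6
      nlinarith

lemma slice_inter_tuple (hn : 1 ≤ n) {I J : EndE n} (hI : I * I = -1) (hJ : J * J = -1)
    (hne1 : J ≠ I) (hne2 : J ≠ -I) :
    CId n d J ∩ CId n d I ⊆ RealSet n d := by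
  rintro q ⟨hqJ, hqI⟩ ℓ
  exact slice_inter hn hI hJ hne1 hne2 (hqJ ℓ) (hqI ℓ)

lemma exists_retraction (hn : 1 ≤ n) {J : EndE n} (hJ : J * J = -1) :
    ∃ ρ : (Fin d → EndE n) →ₗ[ℝ] (Fin d → ℂ),
      Continuous ρ ∧ ∀ z : Fin d → ℂ, ρ (PsiL n d J z) = z := by
  have hker : LinearMap.ker (PsiL n d J : (Fin d → ℂ) →ₗ[ℝ] (Fin d → EndE n)) = ⊥ := by
    rw [LinearMap.ker_eq_bot]
    exact psiL_injective hn hJ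
  obtain ⟨ρ, hρ⟩ := LinearMap.exists_leftInverse_of_injective _ hker
  refine ⟨ρ, ρ.continuous_of_finiteDimensional, fun z => ?_⟩
  exact DFunLike.congr_fun hρ z

lemma sliceTop_isOpen_iff {𝒞 : Set (EndE n)} {S : Set (Fin d → EndE n)} :
    IsOpen[sliceTop n d 𝒞] S ↔
      ∀ J ∈ 𝒞, IsOpen ((Subtype.val : CId n d J → Fin d → EndE n) ⁻¹' S) := by
  unfold sliceTop
  rw [isOpen_iSup_iff]
  refine forall_congr' fun J => ?_
  rw [isOpen_iSup_iff]
  exact forall_congr' fun hJ => isOpen_coinduced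

lemma psiL_rho_eq (hn : 1 ≤ n) {J : EndE n} (hJ : J * J = -1)
    {ρ : (Fin d → EndE n) →ₗ[ℝ] (Fin d → ℂ)} (hρl : ∀ z, ρ (PsiL n d J z) = z)
    {q : Fin d → EndE n} (hq : q ∈ CId n d J) : PsiL n d J (ρ q) = q := by
  obtain ⟨z, hz⟩ := (mem_CId_iff q).1 hq
  rw [← hz, hρl]

lemma clopen_slice (hn : 1 ≤ n) {𝒞 : Set (EndE n)} (hcs : 𝒞 ⊆ CS n)
    {Ω : Set (Fin d → EndE n)} (hΩ : SliceDomain n d 𝒞 Ω)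
    {J : EndE n} (hJ𝒞 : J ∈ 𝒞) {C : Set (Fin d → ℂ)}
    (hCopen : IsOpen C) (hCco : IsOpen ((⇑(PsiL n d J) ⁻¹' Ω) \ C))
    (hCsub : C ⊆ ⇑(PsiL n d J) ⁻¹' Ω)
    (hCne : C.Nonempty) (hnoreal : ∀ z ∈ C, ¬(∀ ℓ, (z ℓ).im = 0)) :
    Ω ⊆ ⇑(PsiL n d J) '' C := by
  have hJcs : J * J = -1 := hcs hJ𝒞
  obtain ⟨ρ, hρc, hρl⟩ := exists_retraction (d := d) hn hJcs
  have himg : ∀ S : Set (Fin d → ℂ),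
      ⇑(PsiL n d J) '' S = CId n d J ∩ ⇑ρ ⁻¹' S := by
    intro S
    ext q
    constructor
    · rintro ⟨z, hz, rfl⟩
      exact ⟨psiL_mem_CId z, by rw [Set.mem_preimage, hρl]; exact hz⟩
    · rintro ⟨hq, hq2⟩
      exact ⟨ρ q, hq2, psiL_rho_eq hn hJcs hρl hq⟩
  have hnr : ∀ q ∈ ⇑(PsiL n d J) '' C, q ∉ RealSet n d := by
    rintro q ⟨z, hz, rfl⟩ hq
    exact hnoreal z hz ((psiL_mem_RealSet_iff hn hJcs z).1 hq)
  have hCId_eq : ∀ K : EndE n, (K = J ∨ K = -J) → CId n d K = CId n d J := by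
    rintro K (rfl | rfl)
    · rfl
    · exact CId_neg J
  have hdisj : ∀ K ∈ 𝒞, ¬(K = J ∨ K = -J) →
      ∀ q, q ∈ CId n d K → q ∈ ⇑(PsiL n d J) '' C → False := by
    intro K hK hKJ q hqK hqC
    push_neg at hKJ
    have hKcs : K * K = -1 := hcs hK
    have hreal : q ∈ RealSet n d := by
      have := slice_inter_tuple (d := d) hn hJcs hKcs hKJ.1 hKJ.2
      have hqJ : q ∈ CId n d J := ((himg C) ▸ hqC).1
      exact this ⟨hqK, hqJ⟩
    exact hnr q hqC hreal
  have hU : IsOpen[sliceTop n d 𝒞] (⇑(PsiL n d J) '' C) := by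
    rw [sliceTop_isOpen_iff]
    intro K hK
    by_cases hKJ : K = J ∨ K = -J
    · have hCId := hCId_eq K hKJ
      have heq : (Subtype.val ⁻¹' (⇑(PsiL n d J) '' C) : Set (CId n d K))
          = (fun q : CId n d K => ρ q.val) ⁻¹' C := by
        ext q
        simp only [Set.mem_preimage, himg C, Set.mem_inter_iff]
        have hq2 : q.val ∈ CId n d J := hCId ▸ q.2
        tauto
      rw [heq]
      exact hCopen.preimage (hρc.comp continuous_subtype_val)
    · have heq : (Subtype.val ⁻¹' (⇑(PsiL n d J) '' C) : Set (CId n d K)) = ∅ := by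
        ext q
        simp only [Set.mem_preimage, Set.mem_empty_iff_false, iff_false]
        exact fun hq => hdisj K hK hKJ q.val q.2 hq
      rw [heq]
      exact isOpen_empty
  have hV : IsOpen[sliceTop n d 𝒞] (Ω \ ⇑(PsiL n d J) '' C) := by
    rw [sliceTop_isOpen_iff]
    intro K hK
    obtain ⟨UK, hUK, hUKeq⟩ := hΩ.1.2 K hK
    by_cases hKJ : K = J ∨ K = -J
    · have hCId := hCId_eq K hKJ
      have heq : (Subtype.val ⁻¹' (Ω \ ⇑(PsiL n d J) '' C) : Set (CId n d K))
          = (fun q : CId n d K => ρ q.val) ⁻¹' ((⇑(PsiL n d J) ⁻¹' Ω) \ C) := by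
        ext q
        have hq2 : q.val ∈ CId n d J := hCId ▸ q.2
        have hqpsi : PsiL n d J (ρ q.val) = q.val := psiL_rho_eq hn hJcs hρl hq2
        simp only [Set.mem_preimage, Set.mem_diff, Set.mem_preimage, hqpsi]
        constructor
        · rintro ⟨h1, h2⟩
          refine ⟨h1, fun hc => h2 ?_⟩
          exact ⟨ρ q.val, hc, hqpsi⟩
        · rintro ⟨h1, h2⟩
          refine ⟨h1, fun hc => h2 ?_⟩
          rw [himg C] at hc
          exact hc.2
      rw [heq]
      exact hCco.preimage (hρc.comp continuous_subtype_val)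
    · have heq : (Subtype.val ⁻¹' (Ω \ ⇑(PsiL n d J) '' C) : Set (CId n d K))
          = (Subtype.val ⁻¹' UK : Set (CId n d K)) := by
        ext q
        simp only [Set.mem_preimage, Set.mem_diff]
        constructor
        · rintro ⟨h1, _⟩
          have : q.val ∈ UK ∩ CId n d K := by rw [← hUKeq]; exact ⟨h1, q.2⟩
          exact this.1
        · intro h1
          have hΩq : q.val ∈ Ω := by
            have : q.val ∈ Ω ∩ CId n d K := by rw [hUKeq]; exact ⟨h1, q.2⟩
            exact this.1
          exact ⟨hΩq, fun hc => hdisj K hK hKJ q.val q.2 hc⟩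
      rw [heq]
      exact hUK.preimage continuous_subtype_val
  by_contra hnot
  rw [Set.not_subset] at hnot
  obtain ⟨p, hpΩ, hpC⟩ := hnot
  obtain ⟨z₀, hz₀⟩ := hCne
  have hpc : @IsPreconnected _ (sliceTop n d 𝒞) Ω := hΩ.2.2
  have hcover : Ω ⊆ (⇑(PsiL n d J) '' C) ∪ (Ω \ ⇑(PsiL n d J) '' C) := by
    intro q hq
    by_cases h : q ∈ ⇑(PsiL n d J) '' C
    · exact Or.inl h
    · exact Or.inr ⟨hq, h⟩
  have hne1 : (Ω ∩ (⇑(PsiL n d J) '' C)).Nonempty :=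
    ⟨PsiL n d J z₀, hCsub hz₀, ⟨z₀, hz₀, rfl⟩⟩
  have hne2 : (Ω ∩ (Ω \ ⇑(PsiL n d J) '' C)).Nonempty := ⟨p, hpΩ, hpΩ, hpC⟩
  obtain ⟨w, hwΩ, hw1, hw2⟩ := hpc _ _ hU hV hcover hne1 hne2
  exact hw2.2 hw1

/-- The difference functions vanish iff the functions agree. -/
lemma eq_of_tk {J : EndE n} {f g : (Fin d → EndE n) → V n} {z : Fin d → ℂ}
    (h : ∀ k, Tk n J k (f (PsiL n d J z)) - Tk n J k (g (PsiL n d J z)) = 0) :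
    f (PsiL n d J z) = g (PsiL n d J z) := by
  have : f (PsiL n d J z) - g (PsiL n d J z) = 0 := by
    apply Tk_zero J
    intro k
    rw [map_sub]
    exact h k
  rw [sub_eq_zero] at this
  exact this

lemma freq_real {a : ℂ} (ha : a.im = 0) {r : ℝ} (hr : 0 < r) :
    ∃ᶠ ζ in 𝓝[≠] a, ζ.im = 0 ∧ dist ζ a < r := by
  rw [Filter.frequently_iff]
  intro Uf hUf
  obtain ⟨δ, hδ, hsub⟩ := Metric.mem_nhdsWithin_iff.1 hUf
  have hpos : 0 < min δ r / 2 := by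
    have := lt_min hδ hr
    positivity
  have hdist : dist (a + (min δ r / 2 : ℝ)) a = min δ r / 2 := by
    rw [dist_eq_norm, add_sub_cancel_left, Complex.norm_real, Real.norm_eq_abs,
      abs_of_pos hpos]
  refine ⟨a + (min δ r / 2 : ℝ), hsub ⟨?_, ?_⟩, ?_, ?_⟩
  · rw [Metric.mem_ball, hdist]
    calc min δ r / 2 < min δ r := by linarith
      _ ≤ δ := min_le_left _ _
  · simp only [Set.mem_compl_iff, Set.mem_singleton_iff]
    intro hcon
    rw [add_eq_left] at hcon
    norm_num at hcon
    linarith [lt_min hδ hr]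
  · simp [ha]
  · rw [hdist]
    calc min δ r / 2 < min δ r := by linarith
      _ ≤ r := min_le_right _ _

def uSet (n d : ℕ) (Ω : Set (Fin d → EndE n)) (f g : (Fin d → EndE n) → V n) :
    Set (Fin d → EndE n) :=
  {p | ∃ c ε, (0 < ε ∧ c ∈ Ω ∩ RealSet n d ∧
    Set.EqOn f g (RealSet n d ∩ Metric.ball c ε ∩ Ω)) ∧ p ∈ Metric.ball c (ε/2)}

lemma uSet_open {Ω : Set (Fin d → EndE n)} {f g : (Fin d → EndE n) → V n} :
    IsOpen (uSet n d Ω f g) := by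
  rw [Metric.isOpen_iff]
  rintro p ⟨c, ε, hA, hp⟩
  refine ⟨ε/2 - dist p c, by rw [Metric.mem_ball] at hp; linarith, ?_⟩
  intro x hx
  rw [Metric.mem_ball] at hx hp
  refine ⟨c, ε, hA, Metric.mem_ball.2 ?_⟩
  calc dist x c ≤ dist x p + dist p c := dist_triangle _ _ _
    _ < ε/2 := by linarith

/-- from local agreement on a slice ball around a real point, membership in `uSet`. -/
lemma real_seed (hn : 1 ≤ n) {𝒞 : Set (EndE n)} {Ω : Set (Fin d → EndE n)}
    {f g : (Fin d → EndE n) → V n} {J : EndE n} (hJcs : J * J = -1)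
    {z' : Fin d → ℂ} (hz' : ∀ ℓ, (z' ℓ).im = 0)
    (hΩm : PsiL n d J z' ∈ Ω) {r : ℝ} (hr : 0 < r)
    (hagree : ∀ z ∈ Metric.ball z' r, f (PsiL n d J z) = g (PsiL n d J z)) :
    PsiL n d J z' ∈ Ω ∩ RealSet n d ∧ PsiL n d J z' ∈ uSet n d Ω f g := by
  have hreal : PsiL n d J z' ∈ RealSet n d := (psiL_mem_RealSet_iff hn hJcs z').2 hz'
  refine ⟨⟨hΩm, hreal⟩, ⟨PsiL n d J z', r, ⟨hr, ⟨hΩm, hreal⟩, ?_⟩, Metric.mem_ball_self (by linarith)⟩⟩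
  rintro p' ⟨⟨hp'R, hp'ball⟩, _⟩
  obtain ⟨z'', hz''real, hz''⟩ := realSet_eq_psiL (J := J) p' hp'R
  have hdist : dist z'' z' < r := by
    rw [← psiL_real_dist hn hz''real hz', hz'']
    exact Metric.mem_ball.1 hp'ball
  rw [← hz'']
  exact hagree z'' (Metric.mem_ball.2 hdist)

/-- CSTEP: the core propagation step near a real point in the closure of `uSet`. -/
lemma cstep (hn : 1 ≤ n) {𝒞 : Set (EndE n)} (hcs : 𝒞 ⊆ CS n)
    {Ω : Set (Fin d → EndE n)} (hΩo : SliceOpen n d 𝒞 Ω)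
    {f g : (Fin d → EndE n) → V n}
    (hf : WSRegular n d 𝒞 Ω f) (hg : WSRegular n d 𝒞 Ω g)
    {J : EndE n} (hJ𝒞 : J ∈ 𝒞)
    {q : Fin d → EndE n} (hq : q ∈ Ω ∩ RealSet n d)
    (hqc : q ∈ closure (uSet n d Ω f g))
    {zq : Fin d → ℂ} (hzqre : ∀ ℓ, (zq ℓ).im = 0) (hzq : PsiL n d J zq = q)
    {r : ℝ} (hr : 0 < r) (hball : Metric.ball zq r ⊆ ⇑(PsiL n d J) ⁻¹' Ω) :
    ∀ z ∈ Metric.ball zq r, f (PsiL n d J z) = g (PsiL n d J z) := by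
  have hJcs : J * J = -1 := hcs hJ𝒞
  -- find a real point p* in the agreement region, close to q
  obtain ⟨w, hw, hwd⟩ := Metric.mem_closure_iff.1 hqc (r/4) (by linarith)
  obtain ⟨c, ε, ⟨hε, hcΩR, heq⟩, hwball⟩ := hw
  rw [Metric.mem_ball] at hwball
  have hqc' : dist q c < r/4 + ε/2 := by
    calc dist q c ≤ dist q w + dist w c := dist_triangle _ _ _
      _ < r/4 + ε/2 := by linarith
  -- choose the real point p* and its coordinates z*
  have hstar : ∃ zs : Fin d → ℂ, (∀ ℓ, (zs ℓ).im = 0) ∧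
      PsiL n d J zs ∈ Metric.ball c ε ∧ dist zs zq < r := by
    by_cases hcase : ε ≤ r/2
    · obtain ⟨zc, hzcre, hzc⟩ := realSet_eq_psiL (J := J) c hcΩR.2
      refine ⟨zc, hzcre, by rw [hzc]; exact Metric.mem_ball_self hε, ?_⟩
      rw [← psiL_real_dist hn hzcre hzqre, hzc, hzq, dist_comm]
      calc dist q c < r/4 + ε/2 := hqc'
        _ ≤ r/4 + r/4 := by linarith
        _ < r := by linarith
    · push_neg at hcase
      refine ⟨zq, hzqre, ?_, by rw [dist_self]; exact hr⟩
      rw [hzq, Metric.mem_ball]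
      calc dist q c < r/4 + ε/2 := hqc'
        _ < ε := by linarith
  obtain ⟨zs, hzsre, hzsball, hzsdist⟩ := hstar
  have hzs_in : zs ∈ Metric.ball zq r := Metric.mem_ball.2 hzsdist
  -- small ball around z* inside the agreement region
  have hOopen : IsOpen (Metric.ball zq r ∩ ⇑(PsiL n d J) ⁻¹' (Metric.ball c ε)) :=
    Metric.isOpen_ball.inter (Metric.isOpen_ball.preimage (PsiL n d J).continuous)
  obtain ⟨r₁, hr₁, hr₁sub⟩ := Metric.isOpen_iff.1 hOopen zs ⟨hzs_in, hzsball⟩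
  -- difference functions
  set h : Fin (2*n) → (Fin d → ℂ) → ℂ :=
    fun k z => Tk n J k (f (PsiL n d J z)) - Tk n J k (g (PsiL n d J z)) with hh
  have hdiff : ∀ (k) (z), z ∈ ⇑(PsiL n d J) ⁻¹' Ω → DifferentiableAt ℂ (h k) z := by
    intro k z hz
    exact (tk_diff hΩo hJ𝒞 hJcs hf k z hz).sub (tk_diff hΩo hJ𝒞 hJcs hg k z hz)
  -- h vanishes on the real polydisc around z*
  have hvan : ∀ w' : Fin d → ℂ,
      (∀ ℓ, (w' ℓ).im = 0 ∧ dist (w' ℓ) (zs ℓ) < r₁) → ∀ k, h k w' = 0 := by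
    intro w' hw' k
    have hw'ball : w' ∈ Metric.ball zs r₁ := (dist_pi_lt_iff hr₁).2 fun ℓ => (hw' ℓ).2
    have hw'mem := hr₁sub hw'ball
    have hfeq : f (PsiL n d J w') = g (PsiL n d J w') := by
      apply heq
      exact ⟨⟨(psiL_mem_RealSet_iff hn hJcs w').2 fun ℓ => (hw' ℓ).1, hw'mem.2⟩,
        hball hw'mem.1⟩
    rw [hh]; simp [hfeq]
  -- vanishing on ball z* r₁ via KEY
  have hzero1 : ∀ k, ∀ w' ∈ Metric.ball zs r₁, h k w' = 0 := by
    intro k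
    exact key_polydisc hr₁ (fun w' hw' => hdiff k w' (hball (hr₁sub hw').1))
      (fun ℓ => {ζ | ζ.im = 0 ∧ dist ζ (zs ℓ) < r₁}) zs
      (fun ℓ => Metric.mem_ball_self hr₁) (fun ℓ ζ hζ => Metric.mem_ball.2 hζ.2)
      (fun ℓ => freq_real (hzsre ℓ) hr₁) (fun w' hw' => hvan w' hw' k)
  have hzero2 : ∀ k, ∀ z ∈ Metric.ball zq r, h k z = 0 := fun k =>
    prop_connected Metric.isOpen_ball (convex_ball zq r).isPreconnected
      (fun z hz => hdiff k z (hball hz)) hzs_in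
      (Metric.eventually_nhds_iff_ball.2 ⟨r₁, hr₁, hzero1 k⟩)
  intro z hz
  exact eq_of_tk (fun k => hzero2 k z hz)

lemma comp_open {U' : Set (Fin d → ℂ)} (hU' : IsOpen U') (z : Fin d → ℂ) :
    IsOpen (U' \ connectedComponentIn U' z) := by
  have heq : U' \ connectedComponentIn U' z =
      ⋃ w : {w : Fin d → ℂ // w ∈ U' \ connectedComponentIn U' z},
        connectedComponentIn U' w.val := by
    ext x
    constructor
    · intro hx
      exact Set.mem_iUnion.2 ⟨⟨x, hx⟩, mem_connectedComponentIn hx.1⟩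
    · intro hx
      obtain ⟨⟨w, hw⟩, hxw⟩ := Set.mem_iUnion.1 hx
      refine ⟨connectedComponentIn_subset _ _ hxw, fun hxC => ?_⟩
      have h1 : connectedComponentIn U' w = connectedComponentIn U' x :=
        connectedComponentIn_eq hxw
      have h2 : connectedComponentIn U' z = connectedComponentIn U' x :=
        connectedComponentIn_eq hxC
      exact hw.2 (by rw [h2, ← h1]; exact mem_connectedComponentIn hw.1)
  rw [heq]
  exact isOpen_iUnion fun w => hU'.connectedComponentIn

lemma main_eqon (hn : 1 ≤ n) {𝒞 : Set (EndE n)} (h𝒞 : 𝒞.Nonempty) (hcs : 𝒞 ⊆ CS n)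
    {Ω : Set (Fin d → EndE n)} (hΩ : SliceDomain n d 𝒞 Ω) (hrc : RealConnected n d Ω)
    {f g : (Fin d → EndE n) → V n}
    (hf : WSRegular n d 𝒞 Ω f) (hg : WSRegular n d 𝒞 Ω g)
    (hseed : ((Ω ∩ RealSet n d) ∩ uSet n d Ω f g).Nonempty) : Set.EqOn f g Ω := by
  have hΩo := hΩ.1
  have hsub : Ω ∩ RealSet n d ⊆ uSet n d Ω f g := by
    refine hrc.subset_of_closure_inter_subset uSet_open hseed ?_
    rintro q ⟨hqc, hqΩ, hqR⟩
    obtain ⟨J₀, hJ₀⟩ := h𝒞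
    obtain ⟨zq, hzqre, hzq⟩ := realSet_eq_psiL (J := J₀) q hqR
    have hzqU : zq ∈ ⇑(PsiL n d J₀) ⁻¹' Ω := by rw [Set.mem_preimage, hzq]; exact hqΩ
    obtain ⟨r, hr, hball⟩ := Metric.isOpen_iff.1 (psi_preimage_open hΩo hJ₀) zq hzqU
    have hagree := cstep hn hcs hΩo hf hg hJ₀ ⟨hqΩ, hqR⟩ hqc hzqre hzq hr hball
    have hres := real_seed (𝒞 := 𝒞) hn (hcs hJ₀) hzqre
      (by rw [hzq]; exact hqΩ) hr hagree
    rw [hzq] at hres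
    exact hres.2
  intro q hqΩ
  obtain ⟨J, hJ𝒞, hqJ⟩ := Set.mem_iUnion₂.1 (hΩo.1 hqΩ)
  have hJcs := hcs hJ𝒞
  obtain ⟨z, hz⟩ := (mem_CId_iff q).1 hqJ
  set U' := ⇑(PsiL n d J) ⁻¹' Ω with hU'
  have hU'open : IsOpen U' := psi_preimage_open hΩo hJ𝒞
  have hzU : z ∈ U' := by rw [hU', Set.mem_preimage, hz]; exact hqΩ
  set C := connectedComponentIn U' z with hC
  have hzC : z ∈ C := mem_connectedComponentIn hzU
  have hCopen : IsOpen C := hU'open.connectedComponentIn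
  have hCsub : C ⊆ U' := connectedComponentIn_subset _ _
  set h : Fin (2*n) → (Fin d → ℂ) → ℂ :=
    fun k z' => Tk n J k (f (PsiL n d J z')) - Tk n J k (g (PsiL n d J z')) with hh
  have hdiff : ∀ (k) (w), w ∈ U' → DifferentiableAt ℂ (h k) w := fun k w hw =>
    (tk_diff hΩo hJ𝒞 hJcs hf k w hw).sub (tk_diff hΩo hJ𝒞 hJcs hg k w hw)
  by_cases hCreal : ∃ z' ∈ C, ∀ ℓ, (z' ℓ).im = 0
  · obtain ⟨z', hz'C, hz're⟩ := hCreal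
    have hz'Ω : PsiL n d J z' ∈ Ω := hCsub hz'C
    have hz'R : PsiL n d J z' ∈ RealSet n d := (psiL_mem_RealSet_iff hn hJcs z').2 hz're
    have hz'u : PsiL n d J z' ∈ closure (uSet n d Ω f g) :=
      subset_closure (hsub ⟨hz'Ω, hz'R⟩)
    obtain ⟨r, hr, hball⟩ := Metric.isOpen_iff.1 hU'open z' (hCsub hz'C)
    have hagree := cstep hn hcs hΩo hf hg hJ𝒞 ⟨hz'Ω, hz'R⟩ hz'u hz're rfl hr hball
    have hzero : ∀ k, ∀ w ∈ C, h k w = 0 := fun k =>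
      prop_connected hCopen isPreconnected_connectedComponentIn
        (fun w hw => hdiff k w (hCsub hw)) hz'C
        (Metric.eventually_nhds_iff_ball.2 ⟨r, hr, fun w hw => by
          rw [hh]; simp [hagree w hw]⟩)
    rw [← hz]
    exact eq_of_tk fun k => hzero k z hzC
  · have hCreal' : ∀ z' ∈ C, ¬∀ ℓ, (z' ℓ).im = 0 := fun z' hz' hc => hCreal ⟨z', hz', hc⟩
    have hCco : IsOpen (U' \ C) := comp_open hU'open z
    have himg := clopen_slice hn hcs hΩ hJ𝒞 hCopen hCco hCsub ⟨z, hzC⟩ hCreal'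
    obtain ⟨q₀, hq₀ΩR, _⟩ := hseed
    obtain ⟨z₀', hz₀'C, hz₀'⟩ := himg hq₀ΩR.1
    exact absurd ((psiL_mem_RealSet_iff hn hJcs z₀').1 (hz₀' ▸ hq₀ΩR.2))
      (hCreal' z₀' hz₀'C)


/-- Identity lemma on real-connected slice-domains: two weak slice regular functions
agreeing on a nonempty relatively open subset of Ω ∩ ℝ^d (when Ω meets the reals), or of
some Ω ∩ ℂ_I^d, agree on all of Ω. -/
theorem identity_lemma_realConnected (n d : ℕ) (hn : 1 ≤ n) (hd : 1 ≤ d)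
    (𝒞 : Set (EndE n)) (h𝒞 : 𝒞.Nonempty) (hsym : ∀ I ∈ 𝒞, -I ∈ 𝒞) (hcs : 𝒞 ⊆ CS n)
    (Ω : Set (Fin d → EndE n)) (hΩ : SliceDomain n d 𝒞 Ω) (hrc : RealConnected n d Ω)
    (f g : (Fin d → EndE n) → V n)
    (hf : WSRegular n d 𝒞 Ω f) (hg : WSRegular n d 𝒞 Ω g) :
    ((Ω ∩ RealSet n d).Nonempty →
      ∀ D : Set (Fin d → EndE n), D.Nonempty → D ⊆ Ω ∩ RealSet n d →
        (∃ U : Set (Fin d → EndE n), IsOpen U ∧ D = U ∩ RealSet n d) →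
        Set.EqOn f g D → Set.EqOn f g Ω) ∧
    (∀ I ∈ 𝒞, ∀ D : Set (Fin d → EndE n), D.Nonempty → D ⊆ Ω ∩ CId n d I →
        (∃ U : Set (Fin d → EndE n), IsOpen U ∧ D = U ∩ CId n d I) →
        Set.EqOn f g D → Set.EqOn f g Ω) := by
  constructor
  · rintro _ D hDne hDsub ⟨U, hUopen, hDeq⟩ hEq
    obtain ⟨q₀, hq₀⟩ := hDne
    have hq₀Ω : q₀ ∈ Ω := (hDsub hq₀).1
    have hq₀R : q₀ ∈ RealSet n d := (hDsub hq₀).2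
    have hq₀U : q₀ ∈ U := (hDeq ▸ hq₀).1
    obtain ⟨ε, hε, hball⟩ := Metric.isOpen_iff.1 hUopen q₀ hq₀U
    refine main_eqon hn h𝒞 hcs hΩ hrc hf hg
      ⟨q₀, ⟨hq₀Ω, hq₀R⟩, ⟨q₀, ε, ⟨hε, ⟨hq₀Ω, hq₀R⟩, ?_⟩,
        Metric.mem_ball_self (by linarith)⟩⟩
    rintro p' ⟨⟨hp'R, hp'ball⟩, _⟩
    exact hEq (hDeq ▸ ⟨hball hp'ball, hp'R⟩)
  · rintro I hI D hDne hDsub ⟨U, hUopen, hDeq⟩ hEq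
    have hIcs : I * I = -1 := hcs hI
    obtain ⟨q₀, hq₀⟩ := hDne
    have hq₀Ω : q₀ ∈ Ω := (hDsub hq₀).1
    have hq₀I : q₀ ∈ CId n d I := (hDsub hq₀).2
    obtain ⟨z₀, hz₀⟩ := (mem_CId_iff q₀).1 hq₀I
    set U' := ⇑(PsiL n d I) ⁻¹' Ω with hU'
    have hU'open : IsOpen U' := psi_preimage_open hΩ.1 hI
    set O := ⇑(PsiL n d I) ⁻¹' U with hO
    have hOopen : IsOpen O := hUopen.preimage (PsiL n d I).continuous
    have hOD : ∀ z ∈ O, PsiL n d I z ∈ D := fun z hz =>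
      hDeq ▸ ⟨hz, psiL_mem_CId z⟩
    have hOsub : O ⊆ U' := fun z hz => hDsub (hOD z hz)|>.1
    have hz₀O : z₀ ∈ O := by
      rw [hO, Set.mem_preimage, hz₀]
      exact (hDeq ▸ hq₀).1
    have hz₀U : z₀ ∈ U' := hOsub hz₀O
    set C := connectedComponentIn U' z₀ with hC
    have hz₀C : z₀ ∈ C := mem_connectedComponentIn hz₀U
    have hCopen : IsOpen C := hU'open.connectedComponentIn
    have hCsub : C ⊆ U' := connectedComponentIn_subset _ _
    set h : Fin (2*n) → (Fin d → ℂ) → ℂ :=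
      fun k z' => Tk n I k (f (PsiL n d I z')) - Tk n I k (g (PsiL n d I z')) with hh
    have hdiff : ∀ (k) (w), w ∈ U' → DifferentiableAt ℂ (h k) w := fun k w hw =>
      (tk_diff hΩ.1 hI hIcs hf k w hw).sub (tk_diff hΩ.1 hI hIcs hg k w hw)
    obtain ⟨rO, hrO, hrOball⟩ := Metric.isOpen_iff.1 hOopen z₀ hz₀O
    have hzeroC : ∀ k, ∀ w ∈ C, h k w = 0 := fun k =>
      prop_connected hCopen isPreconnected_connectedComponentIn
        (fun w hw => hdiff k w (hCsub hw)) hz₀C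
        (Metric.eventually_nhds_iff_ball.2 ⟨rO, hrO, fun w hw => by
          rw [hh]; simp [hEq (hOD w (hrOball hw))]⟩)
    by_cases hCreal : ∃ z' ∈ C, ∀ ℓ, (z' ℓ).im = 0
    · obtain ⟨z', hz'C, hz're⟩ := hCreal
      obtain ⟨r₂, hr₂, hr₂ball⟩ := Metric.isOpen_iff.1 hCopen z' hz'C
      have hagree : ∀ z ∈ Metric.ball z' r₂, f (PsiL n d I z) = g (PsiL n d I z) :=
        fun z hz => eq_of_tk fun k => hzeroC k z (hr₂ball hz)
      have hres := real_seed (𝒞 := 𝒞) hn hIcs hz're (hCsub hz'C) hr₂ hagree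
      exact main_eqon hn h𝒞 hcs hΩ hrc hf hg ⟨PsiL n d I z', hres.1, hres.2⟩
    · have hCreal' : ∀ z' ∈ C, ¬∀ ℓ, (z' ℓ).im = 0 := fun z' hz' hc => hCreal ⟨z', hz', hc⟩
      have hCco : IsOpen (U' \ C) := comp_open hU'open z₀
      have himg := clopen_slice hn hcs hΩ hI hCopen hCco hCsub ⟨z₀, hz₀C⟩ hCreal'
      intro q hqΩ
      obtain ⟨zz, hzzC, hzzq⟩ := himg hqΩ
      rw [← hzzq]
      exact eq_of_tk fun k => hzeroC k zz hzzC
end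
end
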